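/- arXiv:2512.08689 — 2 statements merged into one kernel-verified Lean document; each statement's English description precedes it below -/
import Mathlib

section
/- If for symmetric matrices W₁ ∈ ℝ^{n×n}, W₂ ∈ ℝ^{m×m} and X ∈ ℝ^{n×m} the block matrix [[W₁, X],[Xᵀ, W₂]] is positive semidefinite, then ‖X‖_* ≤ (1/2)(Tr(W₁) + Tr(W₂)). -/
open Matrix

/-- Nuclear norm: the sum of the singular values of `X`, i.e. the square roots of the
eigenvalues of `XᵀX`. -/
noncomputable def nuclearNorm {n m : ℕ} (X : Matrix (Fin n) (Fin m) ℝ) : ℝ :=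
  ∑ i, Real.sqrt ((Matrix.isHermitian_conjTranspose_mul_self X).eigenvalues i)

private lemma sum_quad_eq_trace' {n m : ℕ} (M : Matrix (Fin n) (Fin n) ℝ) (u : Fin m → Fin n → ℝ) :
    ∑ i, u i ⬝ᵥ (M *ᵥ u i)
      = (M * ((Matrix.of fun k i => u i k) * (Matrix.of fun k i => u i k)ᵀ)).trace := by
  rw [← Matrix.mul_assoc, Matrix.trace_mul_comm]
  simp only [Matrix.trace, Matrix.diag_apply, Matrix.mul_apply, Matrix.transpose_apply,
    Matrix.of_apply, dotProduct, Matrix.mulVec, dotProduct]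

private lemma trace_nonneg_of_posSemidef' {k : ℕ} {M : Matrix (Fin k) (Fin k) ℝ}
    (hM : M.PosSemidef) : 0 ≤ M.trace := by
  apply Finset.sum_nonneg
  intro i _
  exact hM.diag_nonneg

/-- If the block matrix `[[W₁, X], [Xᵀ, W₂]]` is positive semidefinite
(with `W₁, W₂` symmetric), then `‖X‖_* ≤ (1/2)(Tr W₁ + Tr W₂)`. -/
theorem nuclearNorm_le_half_trace {n m : ℕ}
    (W₁ : Matrix (Fin n) (Fin n) ℝ) (W₂ : Matrix (Fin m) (Fin m) ℝ)
    (X : Matrix (Fin n) (Fin m) ℝ)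
    (hW₁ : W₁ᵀ = W₁) (hW₂ : W₂ᵀ = W₂)
    (hpsd : (Matrix.fromBlocks W₁ X Xᵀ W₂).PosSemidef) :
    nuclearNorm X ≤ (1 / 2) * (W₁.trace + W₂.trace) := by
  classical
  unfold nuclearNorm
  have h := Matrix.isHermitian_conjTranspose_mul_self X
  set lam : Fin m → ℝ := h.eigenvalues with hlam
  have hlam0 : ∀ i, 0 ≤ lam i := fun i => X.eigenvalues_conjTranspose_mul_self_nonneg i
  set V : Matrix (Fin m) (Fin m) ℝ :=
    (Matrix.IsHermitian.eigenvectorUnitary h : Matrix (Fin m) (Fin m) ℝ) with hV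
  set v : Fin m → Fin m → ℝ := fun i => ⇑(h.eigenvectorBasis i) with hv
  have hVapply : ∀ k i, V k i = v i k := fun k i => Matrix.IsHermitian.eigenvectorUnitary_apply h k i
  have hVV : star V * V = 1 := Unitary.coe_star_mul_self _
  have hVV' : V * star V = 1 := Unitary.coe_mul_star_self _
  have hortho : ∀ i j, v i ⬝ᵥ v j = if i = j then (1:ℝ) else 0 := by
    intro i j
    have h1 := congrFun (congrFun hVV i) j
    simp only [Matrix.mul_apply, Matrix.star_apply, Matrix.star_eq_conjTranspose,
      Matrix.conjTranspose_apply, star_trivial, Matrix.one_apply] at h1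
    simpa [dotProduct, hVapply] using h1
  have heig : ∀ i, (Xᴴ * X) *ᵥ v i = lam i • v i := fun i => h.mulVec_eigenvectorBasis i
  have hXv : ∀ i j, (X *ᵥ v i) ⬝ᵥ (X *ᵥ v j) = lam j * (v i ⬝ᵥ v j) := by
    intro i j
    have h1 : v i ⬝ᵥ ((Xᴴ * X) *ᵥ v j) = (X *ᵥ v i) ⬝ᵥ (X *ᵥ v j) := by
      rw [← Matrix.mulVec_mulVec, Matrix.dotProduct_mulVec,
        Matrix.conjTranspose_eq_transpose_of_trivial, Matrix.vecMul_transpose]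
    rw [← h1, heig j, dotProduct_smul, smul_eq_mul]
  have hq : ∀ (a : Fin n → ℝ) (b : Fin m → ℝ),
      2 * (a ⬝ᵥ (X *ᵥ b)) ≤ a ⬝ᵥ (W₁ *ᵥ a) + b ⬝ᵥ (W₂ *ᵥ b) := by
    intro a b
    have h0 := hpsd.dotProduct_mulVec_nonneg (Sum.elim a (-b))
    rw [Matrix.fromBlocks_mulVec] at h0
    have hb : b ⬝ᵥ (Xᵀ *ᵥ a) = a ⬝ᵥ (X *ᵥ b) := by
      rw [Matrix.mulVec_transpose, dotProduct_comm, ← Matrix.dotProduct_mulVec]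
    simp only [star_trivial, sumElim_dotProduct_sumElim, dotProduct_add,
      add_dotProduct, Matrix.mulVec_neg, neg_dotProduct, dotProduct_neg,
      neg_neg, Sum.elim_comp_inl, Sum.elim_comp_inr] at h0
    linarith [h0, hb]
  -- the left singular vectors
  set u : Fin m → Fin n → ℝ :=
    fun i => if lam i = 0 then 0 else (Real.sqrt (lam i))⁻¹ • (X *ᵥ v i) with hu
  have hkey : ∀ i, 2 * Real.sqrt (lam i) ≤ u i ⬝ᵥ (W₁ *ᵥ u i) + v i ⬝ᵥ (W₂ *ᵥ v i) := by
    intro i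
    have hqi := hq (u i) (v i)
    by_cases hi : lam i = 0
    · have hu0 : u i = 0 := by simp [hu, hi]
      rw [hu0] at hqi ⊢
      simpa [hi, Real.sqrt_eq_zero'] using hqi
    · have hval : u i ⬝ᵥ (X *ᵥ v i) = Real.sqrt (lam i) := by
        rw [hu]
        simp only [hi, if_false, smul_dotProduct, hXv i i, hortho i i, if_pos rfl, ↓reduceIte,
          mul_one, smul_eq_mul]
        rw [← Real.sqrt_mul_self (hlam0 i)]
        field_simp
        rw [Real.sq_sqrt (Real.sqrt_nonneg _)]
      rw [hval] at hqi
      exact hqi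
  -- sum over right singular vectors equals trace W₂
  have hsum2 : ∑ i, v i ⬝ᵥ (W₂ *ᵥ v i) = W₂.trace := by
    rw [sum_quad_eq_trace']
    have hUV : (Matrix.of fun k i => v i k) = V := by
      ext k i; exact (hVapply k i).symm
    rw [hUV, ← Matrix.conjTranspose_eq_transpose_of_trivial, ← Matrix.star_eq_conjTranspose,
      hVV', mul_one]
  -- sum over left singular vectors bounded by trace W₁
  have hW₁psd : W₁.PosSemidef := by
    refine Matrix.PosSemidef.of_dotProduct_mulVec_nonneg ?_ ?_
    · rw [Matrix.IsHermitian, Matrix.conjTranspose_eq_transpose_of_trivial, hW₁]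
    · intro a
      have := hq a 0
      simpa using this
  have hsum1 : ∑ i, u i ⬝ᵥ (W₁ *ᵥ u i) ≤ W₁.trace := by
    rw [sum_quad_eq_trace']
    set U : Matrix (Fin n) (Fin m) ℝ := Matrix.of fun k i => u i k with hU
    set d : Fin m → ℝ := fun i => if lam i = 0 then (0:ℝ) else 1 with hd
    have hUtU : Uᵀ * U = Matrix.diagonal d := by
      ext i j
      have h2 : (Uᵀ * U) i j = u i ⬝ᵥ u j := by
        simp [Matrix.mul_apply, dotProduct, hU]
      rw [h2]
      by_cases hi : lam i = 0
      · have hz : u i = 0 := by simp [hu, hi]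
        rw [hz, zero_dotProduct]
        by_cases hij : i = j
        · subst hij; simp [Matrix.diagonal_apply_eq, hd, hi]
        · simp [Matrix.diagonal_apply_ne _ hij]
      · by_cases hj : lam j = 0
        · have hz : u j = 0 := by simp [hu, hj]
          have hij : i ≠ j := fun e => hi (e ▸ hj)
          rw [hz, dotProduct_zero]
          simp [Matrix.diagonal_apply_ne _ hij]
        · by_cases hij : i = j
          · subst hij
            simp only [hu, hi, if_false, smul_dotProduct, dotProduct_smul,
              hXv i i, hortho i i, if_pos rfl, ↓reduceIte, mul_one, smul_eq_mul, Matrix.diagonal_apply_eq,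
              hd]
            have hss : Real.sqrt (lam i) * Real.sqrt (lam i) = lam i :=
              Real.mul_self_sqrt (hlam0 i)
            have hs0 : Real.sqrt (lam i) ≠ 0 := by
              intro h0
              rw [h0, zero_mul] at hss
              exact hi hss.symm
            field_simp
            rw [Real.sq_sqrt (hlam0 i)]
          · simp only [hu, hi, hj, if_false, smul_dotProduct, dotProduct_smul,
              hXv i j, hortho i j, if_neg hij, mul_zero, smul_eq_mul,
              Matrix.diagonal_apply_ne _ hij]
    have hUd : U * Matrix.diagonal d = U := by
      ext k i
      rw [Matrix.mul_diagonal]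
      by_cases hi : lam i = 0
      · have hz : U k i = 0 := by simp [hU, hu, hi]
        simp [hd, hi, hz]
      · simp [hd, hi]
    have hPP : (U * Uᵀ) * (U * Uᵀ) = U * Uᵀ := by
      rw [Matrix.mul_assoc U Uᵀ (U * Uᵀ), ← Matrix.mul_assoc Uᵀ U Uᵀ, hUtU,
        ← Matrix.mul_assoc U (Matrix.diagonal d) Uᵀ, hUd]
    set P : Matrix (Fin n) (Fin n) ℝ := U * Uᵀ with hP
    have hPsymm : Pᵀ = P := by rw [hP, Matrix.transpose_mul, Matrix.transpose_transpose]
    have hQsymm : (1 - P)ᴴ = 1 - P := by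
      rw [Matrix.conjTranspose_eq_transpose_of_trivial, Matrix.transpose_sub, hPsymm,
        Matrix.transpose_one]
    have hQQ : (1 - P) * (1 - P) = 1 - P := by
      simp only [Matrix.sub_mul, Matrix.mul_sub, Matrix.one_mul, Matrix.mul_one, hPP]
      abel
    have htr : 0 ≤ ((1 - P) * W₁ * (1 - P)ᴴ).trace :=
      trace_nonneg_of_posSemidef' (hW₁psd.mul_mul_conjTranspose_same _)
    have htr2 : ((1 - P) * W₁ * (1 - P)ᴴ).trace = (W₁ * (1 - P)).trace := by
      rw [hQsymm, Matrix.trace_mul_cycle, hQQ, Matrix.trace_mul_comm]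
    rw [htr2] at htr
    have hsplit : (W₁ * (1 - P)).trace = W₁.trace - (W₁ * P).trace := by
      rw [Matrix.mul_sub, Matrix.mul_one, Matrix.trace_sub]
    linarith [htr, hsplit]
  have h2 : 2 * ∑ i, Real.sqrt (lam i) = ∑ i, 2 * Real.sqrt (lam i) :=
    Finset.mul_sum _ _ _
  have htotal : ∑ i, (2 * Real.sqrt (lam i)) ≤ W₁.trace + W₂.trace := by
    have hs := Finset.sum_le_sum (fun i (_ : i ∈ Finset.univ) => hkey i)
    rw [Finset.sum_add_distrib, hsum2] at hs
    linarith [hs, hsum1]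
  linarith [htotal, h2]
end

section
/- For any X ∈ ℝ^{n×m} with SVD X = UΣVᵀ, setting W₁ = UΣUᵀ and W₂ = VΣVᵀ yields a positive semidefinite block matrix [[W₁, X],[Xᵀ, W₂]] with (1/2)(Tr(W₁) + Tr(W₂)) = ‖X‖_*. Consequently, ‖X‖_* = min{(1/2)(Tr W₁ + Tr W₂) : [[W₁,X],[Xᵀ,W₂]] ⪰ 0}. -/
open Matrix
open scoped MatrixOrder

lemma psd_trace_nonneg {N : Type*} [Fintype N] [DecidableEq N] {A : Matrix N N ℝ}
    (hA : A.PosSemidef) : 0 ≤ A.trace := by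
  rw [Matrix.trace]
  refine Finset.sum_nonneg fun i _ => ?_
  exact hA.diag_nonneg

lemma trace_sqrt {N : Type*} [Fintype N] [DecidableEq N] {A : Matrix N N ℝ} (hA : A.PosSemidef) :
    (CFC.sqrt A).trace = ∑ i, Real.sqrt (hA.1.eigenvalues i) := by
  rw [CFC.sqrt_eq_cfc, cfc_nnreal_eq_real _ A, hA.1.cfc_eq]
  simp only [IsHermitian.cfc, Unitary.conjStarAlgAut_apply]
  rw [Matrix.trace_mul_cycle,
    (Matrix.mem_unitaryGroup_iff').mp (Matrix.IsHermitian.eigenvectorUnitary hA.1).2, one_mul,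
    Matrix.trace_diagonal]
  simp [max_eq_left (hA.eigenvalues_nonneg _)]

lemma trace_proj_le {N k : ℕ} {W : Matrix (Fin N) (Fin N) ℝ} (hW : W.PosSemidef)
    (U : Matrix (Fin N) (Fin k) ℝ) (hU : Uᵀ * U = 1) :
    (Uᵀ * W * U).trace ≤ W.trace := by
  have hP : (U * Uᵀ) * (U * Uᵀ) = U * Uᵀ := by
    rw [Matrix.mul_assoc, ← Matrix.mul_assoc Uᵀ U, hU, Matrix.one_mul]
  have hC : (1 - U * Uᵀ) * (1 - U * Uᵀ) = 1 - U * Uᵀ := by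
    rw [sub_mul, one_mul, mul_sub, mul_one, hP, sub_self, sub_zero]
  have hCt : (1 - U * Uᵀ)ᵀ = 1 - U * Uᵀ := by
    simp [transpose_sub, transpose_mul]
  have hpsd : ((1 - U * Uᵀ) * W * (1 - U * Uᵀ)).PosSemidef := by
    have := hW.mul_mul_conjTranspose_same (1 - U * Uᵀ)
    rwa [Matrix.conjTranspose_eq_transpose_of_trivial, hCt] at this
  have h0 : 0 ≤ (W * (1 - U * Uᵀ)).trace := by
    have := psd_trace_nonneg hpsd
    rwa [Matrix.trace_mul_cycle, hC, Matrix.trace_mul_comm] at this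
  have h1 : (Uᵀ * W * U).trace = (W * (U * Uᵀ)).trace := by
    rw [Matrix.trace_mul_cycle, Matrix.trace_mul_comm]
  rw [h1]
  have hexp : W.trace = (W * (U * Uᵀ)).trace + (W * (1 - U * Uᵀ)).trace := by
    rw [← Matrix.trace_add, ← Matrix.mul_add]
    simp
  linarith

/-- Given a (thin) SVD `X = U S Vᵀ`, the choices `W₁ = U S Uᵀ` and
`W₂ = V S Vᵀ` make the block matrix `[[W₁, X], [Xᵀ, W₂]]` positive semidefinite with
`(1/2)(Tr W₁ + Tr W₂) = ‖X‖_*`; consequently the nuclear norm is the minimum value of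
`(1/2)(Tr W₁ + Tr W₂)` over all PSD completions. -/
theorem nuclearNorm_sdp_attained {n m k : ℕ}
    (X : Matrix (Fin n) (Fin m) ℝ)
    (U : Matrix (Fin n) (Fin k) ℝ) (V : Matrix (Fin m) (Fin k) ℝ)
    (σ : Fin k → ℝ) (hσ : ∀ i, 0 ≤ σ i)
    (hU : Uᵀ * U = 1) (hV : Vᵀ * V = 1)
    (hSVD : X = U * Matrix.diagonal σ * Vᵀ) :
    (Matrix.fromBlocks (U * Matrix.diagonal σ * Uᵀ) X Xᵀ
        (V * Matrix.diagonal σ * Vᵀ)).PosSemidef ∧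
    (1 / 2) * ((U * Matrix.diagonal σ * Uᵀ).trace + (V * Matrix.diagonal σ * Vᵀ).trace) =
      nuclearNorm X ∧
    IsLeast {t : ℝ | ∃ (W₁ : Matrix (Fin n) (Fin n) ℝ) (W₂ : Matrix (Fin m) (Fin m) ℝ),
        (Matrix.fromBlocks W₁ X Xᵀ W₂).PosSemidef ∧
        t = (1 / 2) * (W₁.trace + W₂.trace)} (nuclearNorm X) := by
  set D : Matrix (Fin k) (Fin k) ℝ := Matrix.diagonal σ with hD
  have hDpsd : D.PosSemidef := Matrix.posSemidef_diagonal_iff.mpr hσ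
  have hXt : Xᵀ = V * D * Uᵀ := by
    rw [hSVD, Matrix.transpose_mul, Matrix.transpose_mul, Matrix.diagonal_transpose,
      Matrix.transpose_transpose, Matrix.mul_assoc]
  have hU' : ∀ {p : Type} [Fintype p] (M : Matrix (Fin k) p ℝ), Uᵀ * (U * M) = M := by
    intro p _ M; rw [← Matrix.mul_assoc, hU, Matrix.one_mul]
  have hV' : ∀ {p : Type} [Fintype p] (M : Matrix (Fin k) p ℝ), Vᵀ * (V * M) = M := by
    intro p _ M; rw [← Matrix.mul_assoc, hV, Matrix.one_mul]
  -- block identity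
  have hblock : Matrix.fromBlocks (U * D * Uᵀ) X Xᵀ (V * D * Vᵀ)
      = (Matrix.fromRows U V) * D * (Matrix.fromRows U V)ᵀ := by
    rw [Matrix.transpose_fromRows, Matrix.fromRows_mul, Matrix.fromRows_mul_fromCols,
      hXt, hSVD]
  -- part 1
  have hPSD : (Matrix.fromBlocks (U * D * Uᵀ) X Xᵀ (V * D * Vᵀ)).PosSemidef := by
    rw [hblock]
    have := hDpsd.mul_mul_conjTranspose_same (Matrix.fromRows U V)
    rwa [Matrix.conjTranspose_eq_transpose_of_trivial] at this
  -- traces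
  have htrU : (U * D * Uᵀ).trace = ∑ i, σ i := by
    rw [Matrix.trace_mul_cycle, hU, Matrix.one_mul, hD, Matrix.trace_diagonal]
  have htrV : (V * D * Vᵀ).trace = ∑ i, σ i := by
    rw [Matrix.trace_mul_cycle, hV, Matrix.one_mul, hD, Matrix.trace_diagonal]
  -- nuclearNorm X = ∑ σ
  have hW2psd : (V * D * Vᵀ).PosSemidef := by
    have := hDpsd.mul_mul_conjTranspose_same V
    rwa [Matrix.conjTranspose_eq_transpose_of_trivial] at this
  have hsq : (V * D * Vᵀ) ^ 2 = Xᵀ * X := by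
    rw [pow_two, hXt, hSVD]
    simp only [Matrix.mul_assoc, hU', hV']
  have hXtXpsd : (Xᵀ * X).PosSemidef := hsq ▸ hW2psd.pow 2
  have hsqrt : V * D * Vᵀ = CFC.sqrt (Xᵀ * X) :=
    (CFC.sqrt_unique (by rw [← sq]; exact hsq) hW2psd.nonneg).symm
  have hnn : nuclearNorm X = ∑ i, σ i := by
    have h1 : (CFC.sqrt (Xᵀ * X)).trace = ∑ i, Real.sqrt (hXtXpsd.1.eigenvalues i) := trace_sqrt hXtXpsd
    have h2 : nuclearNorm X = ∑ i, Real.sqrt (hXtXpsd.1.eigenvalues i) := by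
      unfold nuclearNorm
      congr 1
    rw [h2, ← h1, ← hsqrt, htrV]
  refine ⟨hPSD, by rw [htrU, htrV, hnn]; ring, ?_, ?_⟩
  · exact ⟨U * D * Uᵀ, V * D * Vᵀ, hPSD, by rw [htrU, htrV, hnn]; ring⟩
  · rintro t ⟨W₁, W₂, hM, rfl⟩
    rw [hnn]
    -- lower bound
    set B : Matrix (Fin n ⊕ Fin m) (Fin k) ℝ := Matrix.fromRows U (-V) with hB
    have hNpsd : (Bᵀ * (Matrix.fromBlocks W₁ X Xᵀ W₂) * B).PosSemidef := by
      have := hM.conjTranspose_mul_mul_same B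
      rwa [Matrix.conjTranspose_eq_transpose_of_trivial] at this
    have hN : Bᵀ * (Matrix.fromBlocks W₁ X Xᵀ W₂) * B
        = Uᵀ * (W₁ * U + X * (-V)) + (-V)ᵀ * (Xᵀ * U + W₂ * (-V)) := by
      rw [hB, Matrix.transpose_fromRows, Matrix.mul_assoc, Matrix.fromBlocks_mul_fromRows,
        Matrix.fromCols_mul_fromRows]
    have htrXV : (Uᵀ * (X * V)).trace = ∑ i, σ i := by
      rw [hSVD]
      simp only [Matrix.mul_assoc, hU', hV, Matrix.mul_one]
      rw [hD, Matrix.trace_diagonal]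
    have htrXtU : (Vᵀ * (Xᵀ * U)).trace = ∑ i, σ i := by
      rw [hXt]
      simp only [Matrix.mul_assoc, hV', hU, Matrix.mul_one]
      rw [hD, Matrix.trace_diagonal]
    have hW₁psd : W₁.PosSemidef := by
      have h := hM.submatrix (Sum.inl : Fin n → Fin n ⊕ Fin m)
      have : (Matrix.fromBlocks W₁ X Xᵀ W₂).submatrix Sum.inl Sum.inl = W₁ := by
        ext i j; rfl
      rwa [this] at h
    have hW₂psd : W₂.PosSemidef := by
      have h := hM.submatrix (Sum.inr : Fin m → Fin n ⊕ Fin m)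
      have : (Matrix.fromBlocks W₁ X Xᵀ W₂).submatrix Sum.inr Sum.inr = W₂ := by
        ext i j; rfl
      rwa [this] at h
    have key : 0 ≤ (Uᵀ * W₁ * U).trace + (Vᵀ * W₂ * V).trace - 2 * ∑ i, σ i := by
      have h0 := psd_trace_nonneg hNpsd
      rw [hN] at h0
      have hexpand : (Uᵀ * (W₁ * U + X * (-V)) + (-V)ᵀ * (Xᵀ * U + W₂ * (-V))).trace
          = (Uᵀ * W₁ * U).trace + (Vᵀ * W₂ * V).trace
            - (Uᵀ * (X * V)).trace - (Vᵀ * (Xᵀ * U)).trace := by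
        simp only [Matrix.mul_add, Matrix.mul_neg, Matrix.neg_mul, Matrix.transpose_neg,
          Matrix.trace_add, Matrix.trace_neg, neg_neg, Matrix.mul_assoc]
        ring
      rw [hexpand, htrXV, htrXtU] at h0
      linarith
    have hU1 := trace_proj_le hW₁psd U hU
    have hU2 := trace_proj_le hW₂psd V hV
    linarith
end
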